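/- Let g be a simple Lie 2-algebra over F with toral rank MT(g) = 3 and standard maximal torus t (so the Cartan subalgebra h = c_g(t) is triangulable). Then dim(g_ξ) = dim(g_σ) for any nonzero ξ, σ ∈ t*. -/

import Mathlib

set_option linter.unusedSectionVars false

section Char2Helpers

variable (F : Type*) [Field F] [CharP F 2]

lemma char2_two_eq_zero : (2 : F) = 0 := by
  have := CharP.cast_eq_zero F 2
  exact_mod_cast this

lemma char2_add_self {M : Type*} [AddCommGroup M] [Module F M] (x : M) : x + x = 0 := by
  rw [← two_smul F x, char2_two_eq_zero, zero_smul]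

lemma char2_neg {M : Type*} [AddCommGroup M] [Module F M] (x : M) : -x = x :=
  neg_eq_of_add_eq_zero_left (char2_add_self F x)

/-- cast from `ZMod 2` to `F` -/
def ccF (b : ZMod 2) : F := (b.val : F)

lemma zmod2_cases : ∀ b : ZMod 2, b = 0 ∨ b = 1 := by decide

lemma ccF_zero : ccF F 0 = 0 := by simp [ccF]

lemma ccF_one : ccF F 1 = 1 := by simp [ccF]

lemma ccF_add (i j : ZMod 2) : ccF F (i + j) = ccF F i + ccF F j := by
  rcases zmod2_cases i with hi | hi <;> rcases zmod2_cases j with hj | hj <;> subst hi <;> subst hj <;>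
    simp [ccF_zero, ccF_one]
  rw [show ((1 : ZMod 2) + 1) = 0 by decide, ccF_zero]
  rw [← char2_two_eq_zero F]; norm_num

lemma ccF_eq_zero_iff (i : ZMod 2) : ccF F i = 0 ↔ i = 0 := by
  rcases zmod2_cases i with hi | hi <;> subst hi <;> simp [ccF_zero, ccF_one]

end Char2Helpers

/-- index group for the eight weights -/
abbrev A2 : Type := ZMod 2 × ZMod 2 × ZMod 2

lemma A2_add_self : ∀ a : A2, a + a = 0 := by decide

lemma A2_add_add_cancel (a b : A2) : a + (a + b) = b := by
  rw [← add_assoc, A2_add_self, zero_add]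

/-- the `F₂`-dot product on `A2` -/
def dotA (x y : A2) : ZMod 2 := x.1 * y.1 + x.2.1 * y.2.1 + x.2.2 * y.2.2

lemma dotA_add (x a b : A2) : dotA x (a + b) = dotA x a + dotA x b := by
  simp only [dotA, Prod.fst_add, Prod.snd_add]
  ring

lemma dotA_zero (x : A2) : dotA x 0 = 0 := by
  simp [dotA]

lemma fin2cover {X : Type*} [Nonempty X] (S : Finset X) (h : S.card ≤ 2) :
    ∃ a b : X, ∀ x ∈ S, x = a ∨ x = b := by
  classical
  rcases S.eq_empty_or_nonempty with rfl | ⟨a, ha⟩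
  · obtain ⟨a⟩ := ‹Nonempty X›
    exact ⟨a, a, by simp⟩
  · have h1 : (S.erase a).card ≤ 1 := by
      have := Finset.card_erase_of_mem ha
      omega
    refine ⟨a, ?_⟩
    rcases (S.erase a).eq_empty_or_nonempty with he | ⟨b, hb⟩
    · refine ⟨a, fun x hx => ?_⟩
      by_contra hne
      push_neg at hne
      have : x ∈ S.erase a := Finset.mem_erase.mpr ⟨hne.1, hx⟩
      simp [he] at this
    · refine ⟨b, fun x hx => ?_⟩
      by_cases hxa : x = a
      · exact Or.inl hxa
      · right
        have hx' : x ∈ S.erase a := Finset.mem_erase.mpr ⟨hxa, hx⟩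
        exact Finset.card_le_one.mp h1 x hx' b hb

lemma A2_perp_exists : ∀ d1 d2 : A2, ∃ χ : A2, χ ≠ 0 ∧ dotA χ d1 = 0 ∧ dotA χ d2 = 0 := by
  decide

lemma A2_subgroup_struct : ∀ χ : A2, χ ≠ 0 →
    ∃ a b : A2, dotA χ a = 0 ∧ dotA χ b = 0 ∧
      (∀ lam : A2, dotA χ lam = 0 → lam = 0 ∨ lam = a ∨ lam = b ∨ lam = a + b) := by
  decide

lemma A2_ne_zero_coord : ∀ η : A2, η ≠ 0 → η.1 = 1 ∨ η.2.1 = 1 ∨ η.2.2 = 1 := by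
  decide

lemma A2_card7 : (Finset.univ.filter (fun μ : A2 => μ ≠ 0)).card = 7 := by
  decide
/-- A 2-map on a Lie algebra over the field `F` (char 2 version of a restricted structure):
`(c • x)^[2] = c^2 • x^[2]`, `ad (x^[2]) = (ad x) ∘ (ad x)` and
`(x+y)^[2] = x^[2] + y^[2] + [x,y]`. -/
structure IsTwoMap (F : Type*) [Field F] {g : Type*} [LieRing g] [LieAlgebra F g]
    (p : g → g) : Prop where
  smul_pow : ∀ (c : F) (x : g), p (c • x) = (c ^ 2) • p x
  ad_pow : ∀ x y : g, ⁅p x, y⁆ = ⁅x, ⁅x, y⁆⁆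
  add_pow : ∀ x y : g, p (x + y) = p x + p y + ⁅x, y⁆

/-- An element is 2-nilpotent if some iterate of the 2-map annihilates it. -/
def IsTwoNilpotent {g : Type*} [Zero g] (p : g → g) (x : g) : Prop :=
  ∃ k : ℕ, p^[k] x = 0

/-- A torus of a Lie 2-algebra: a Lie subalgebra closed under the 2-map on which the
2-map is invertible (bijective). -/
def IsTorus (F : Type*) [Field F] {g : Type*} [LieRing g] [LieAlgebra F g]
    (p : g → g) (t : LieSubalgebra F g) : Prop :=
  (∀ x ∈ t, p x ∈ t) ∧ Set.BijOn p (t : Set g) (t : Set g)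

/-- A maximal torus of a Lie 2-algebra. -/
def IsMaxTorus (F : Type*) [Field F] {g : Type*} [LieRing g] [LieAlgebra F g]
    (p : g → g) (t : LieSubalgebra F g) : Prop :=
  IsTorus F p t ∧ ∀ s : LieSubalgebra F g, IsTorus F p s → t ≤ s → s = t

/-- The weight (root) space of a linear functional `lam` on a torus `t`:
`g_lam = {v | [x, v] = lam x • v for all x ∈ t}`. -/
def rootSpace {F : Type*} [Field F] {g : Type*} [LieRing g] [LieAlgebra F g]
    (t : LieSubalgebra F g) (lam : Module.Dual F t) : Submodule F g where
  carrier := {v | ∀ x : t, ⁅(x : g), v⁆ = lam x • v}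
  add_mem' := by
    intro a b ha hb x
    rw [lie_add, ha x, hb x, smul_add]
  zero_mem' := by
    intro x
    rw [lie_zero, smul_zero]
  smul_mem' := by
    intro c v hv x
    rw [lie_smul, hv x, smul_comm]

/-- The set of `t`-roots: nonzero functionals with nonzero root space. -/
def rootSet {F : Type*} [Field F] {g : Type*} [LieRing g] [LieAlgebra F g]
    (t : LieSubalgebra F g) : Set (Module.Dual F t) :=
  {lam | lam ≠ 0 ∧ rootSpace t lam ≠ ⊥}

/-- The subspace `N(σ, δ) = {x ∈ g_σ : [x, g_σ] ⊆ n and [[x, g_δ], g_{σ+δ}] ⊆ n}`,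
given as `Nspace n g_σ g_δ g_{σ+δ}`. -/
def Nspace {F : Type*} [Field F] {g : Type*} [LieRing g] [LieAlgebra F g]
    (n gs gd gsd : Submodule F g) : Submodule F g where
  carrier := {x | x ∈ gs ∧ (∀ y ∈ gs, ⁅x, y⁆ ∈ n) ∧ ∀ z ∈ gd, ∀ w ∈ gsd, ⁅⁅x, z⁆, w⁆ ∈ n}
  add_mem' := by
    intro a b ha hb
    obtain ⟨ha1, ha2, ha3⟩ := ha
    obtain ⟨hb1, hb2, hb3⟩ := hb
    refine ⟨gs.add_mem ha1 hb1, fun y hy => ?_, fun z hz w hw => ?_⟩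
    · rw [add_lie]
      exact n.add_mem (ha2 y hy) (hb2 y hy)
    · rw [add_lie, add_lie]
      exact n.add_mem (ha3 z hz w hw) (hb3 z hz w hw)
  zero_mem' := by
    refine ⟨gs.zero_mem, fun y hy => ?_, fun z hz w hw => ?_⟩
    · rw [zero_lie]; exact n.zero_mem
    · rw [zero_lie, zero_lie]; exact n.zero_mem
  smul_mem' := by
    intro c x hx
    obtain ⟨h1, h2, h3⟩ := hx
    refine ⟨gs.smul_mem c h1, fun y hy => ?_, fun z hz w hw => ?_⟩
    · rw [smul_lie]; exact n.smul_mem c (h2 y hy)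
    · rw [smul_lie, smul_lie]; exact n.smul_mem c (h3 z hz w hw)


section RootSpaceLemmas

variable {F : Type*} [Field F] [CharP F 2] {g : Type*} [LieRing g] [LieAlgebra F g]
  (t : LieSubalgebra F g)

lemma mem_rootSpace {lam : Module.Dual F t} {v : g} :
    v ∈ rootSpace t lam ↔ ∀ x : t, ⁅(x : g), v⁆ = lam x • v := Iff.rfl

lemma rootSpace_bracket {lam mu : Module.Dual F t} {v w : g}
    (hv : v ∈ rootSpace t lam) (hw : w ∈ rootSpace t mu) :
    ⁅v, w⁆ ∈ rootSpace t (lam + mu) := by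
  intro s
  rw [leibniz_lie, hv s, hw s, smul_lie, lie_smul, LinearMap.add_apply, add_smul]

variable (α β γ : Module.Dual F t)

/-- the eight candidate weights -/
def Lfun (ε : A2) : Module.Dual F t :=
  ccF F ε.1 • α + ccF F ε.2.1 • β + ccF F ε.2.2 • γ

lemma Lfun_apply (ε : A2) (x : t) :
    Lfun t α β γ ε x = ccF F ε.1 * α x + ccF F ε.2.1 * β x + ccF F ε.2.2 * γ x := by
  simp [Lfun]

lemma Lfun_add (ε ε' : A2) :
    Lfun t α β γ (ε + ε') = Lfun t α β γ ε + Lfun t α β γ ε' := by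
  ext x
  simp only [Lfun_apply, LinearMap.add_apply, Prod.fst_add, Prod.snd_add, ccF_add]
  ring

lemma Lfun_zero : Lfun t α β γ 0 = 0 := by
  ext x
  simp [Lfun_apply, ccF_zero]

end RootSpaceLemmas

section MainLemmas

variable {F : Type*} [Field F] [CharP F 2] {g : Type*} [LieRing g] [LieAlgebra F g]
variable {p : g → g} {t : LieSubalgebra F g} {n : Submodule F g}

lemma p_zero (hp : IsTwoMap F p) : p 0 = 0 := by
  have h := hp.add_pow 0 0
  simp only [add_zero, lie_self] at h
  have h2 : p 0 = p 0 + p 0 := by simpa using h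
  have := left_eq_add.mp h2
  exact this

lemma p_mem_rootSpace_zero (hp : IsTwoMap F p) {lam : Module.Dual F t} {x : g}
    (hx : x ∈ rootSpace t lam) : p x ∈ rootSpace t (0 : Module.Dual F t) := by
  intro s
  have h1 : ⁅p x, (s : g)⁆ = ⁅x, ⁅x, (s : g)⁆⁆ := hp.ad_pow x s
  have h2 : ⁅x, (s : g)⁆ = -(lam s • x) := by
    rw [← lie_skew, hx s]
  rw [h2, lie_neg, lie_smul, lie_self, smul_zero, neg_zero] at h1
  have h4 := lie_skew (p x) (s : g)
  rw [h1] at h4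
  have h5 : ⁅(s : g), p x⁆ = 0 := neg_eq_zero.mp h4
  simp [h5]

lemma ad_p (hp : IsTwoMap F p) (z : g) :
    LieAlgebra.ad F g (p z) = (LieAlgebra.ad F g z) ^ 2 := by
  apply LinearMap.ext
  intro w
  rw [sq, Module.End.mul_apply]
  simp only [LieAlgebra.ad_apply]
  exact hp.ad_pow z w

lemma ad_iterate (hp : IsTwoMap F p) (y : g) (k : ℕ) :
    LieAlgebra.ad F g (p^[k] y) = (LieAlgebra.ad F g y) ^ (2 ^ k) := by
  induction k with
  | zero => simp
  | succ k ih =>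
    rw [Function.iterate_succ_apply', ad_p hp, ih, ← pow_mul, ← pow_succ]

lemma nil_of_two_nilpotent (hp : IsTwoMap F p) {m : g} (hm : IsTwoNilpotent p m) :
    ∃ k, (LieAlgebra.ad F g m) ^ k = 0 := by
  obtain ⟨k, hk⟩ := hm
  refine ⟨2 ^ k, ?_⟩
  rw [← ad_iterate hp, hk]
  ext w
  simp

lemma nil_inj (N : Module.End F g) (k : ℕ) (hN : N ^ k = 0) (c : F) (hc : c ≠ 0)
    (v : g) (hv : c • v + N v = 0) : v = 0 := by
  have h1 : c • v = N v := by
    have := eq_neg_of_add_eq_zero_left hv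
    rw [this, char2_neg F]
  have hv' : v = c⁻¹ • N v := by
    rw [← h1, smul_smul, inv_mul_cancel₀ hc, one_smul]
  have key : ∀ j : ℕ, v = (c⁻¹) ^ j • (N ^ j) v := by
    intro j
    induction j with
    | zero => simp
    | succ j ih =>
      calc v = c⁻¹ • N v := hv'
        _ = c⁻¹ • N ((c⁻¹) ^ j • (N ^ j) v) := by rw [← ih]
        _ = (c⁻¹) ^ (j + 1) • (N ^ (j + 1)) v := by
            rw [map_smul, smul_smul, ← pow_succ', ← Module.End.mul_apply, ← pow_succ']
  have := key k
  rw [hN] at this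
  simpa using this

end MainLemmas

section MainLemmas2

variable {F : Type*} [Field F] [CharP F 2] {g : Type*} [LieRing g] [LieAlgebra F g]
variable {p : g → g} {t : LieSubalgebra F g} {n : Submodule F g}

lemma two_step (hp : IsTwoMap F p) (θ : g →ₗ[F] t) {lam : Module.Dual F t} (x v : g)
    (hx0 : p x ∈ rootSpace t (0 : Module.Dual F t)) (hv : v ∈ rootSpace t lam) :
    ⁅x, ⁅x, v⁆⁆ = lam (θ (p x)) • v + ⁅p x - ((θ (p x)) : g), v⁆ := by
  rw [← hp.ad_pow]
  have hsplit : p x = ((θ (p x)) : g) + (p x - ((θ (p x)) : g)) := by abel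
  conv_lhs => rw [hsplit]
  rw [add_lie, hv (θ (p x))]

lemma root_inj (hp : IsTwoMap F p)
    (hn : ∀ x : g, x ∈ n ↔ x ∈ rootSpace t 0 ∧ IsTwoNilpotent p x)
    (θ : g →ₗ[F] t) (hθsub : ∀ v ∈ rootSpace t (0 : Module.Dual F t), v - ((θ v) : g) ∈ n)
    {lam : Module.Dual F t} {x v : g} (hx0 : p x ∈ rootSpace t (0 : Module.Dual F t))
    (hv : v ∈ rootSpace t lam) (hc : lam (θ (p x)) ≠ 0) (hzero : ⁅x, ⁅x, v⁆⁆ = 0) :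
    v = 0 := by
  have h6 := two_step hp θ x v hx0 hv
  rw [hzero] at h6
  have hm' : p x - ((θ (p x)) : g) ∈ n := hθsub (p x) hx0
  obtain ⟨k, hk⟩ := nil_of_two_nilpotent hp ((hn _).mp hm').2
  refine nil_inj _ k hk _ hc v ?_
  rw [LieAlgebra.ad_apply, ← h6]

lemma Ztau (hp : IsTwoMap F p)
    (hn : ∀ x : g, x ∈ n ↔ x ∈ rootSpace t 0 ∧ IsTwoNilpotent p x)
    (θ : g →ₗ[F] t) (hθsub : ∀ v ∈ rootSpace t (0 : Module.Dual F t), v - ((θ v) : g) ∈ n)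
    {lam : Module.Dual F t} {x : g} (hx : x ∈ rootSpace t lam) : lam (θ (p x)) = 0 := by
  by_contra hc
  have hx0 := p_mem_rootSpace_zero hp hx
  have hz : ⁅x, ⁅x, x⁆⁆ = 0 := by rw [lie_self, lie_zero]
  have h0 := root_inj hp hn θ hθsub hx0 hx hc hz
  rw [h0, p_zero hp, map_zero, map_zero] at hc
  exact hc rfl

variable (t) in
/-- the root space attached to an index in `A2` -/
def Vsp (α β γ : Module.Dual F t) (ε : A2) : Submodule F g := rootSpace t (Lfun t α β γ ε)

lemma dimE [FiniteDimensional F g] (hp : IsTwoMap F p)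
    (hn : ∀ x : g, x ∈ n ↔ x ∈ rootSpace t 0 ∧ IsTwoNilpotent p x)
    (θ : g →ₗ[F] t) (hθsub : ∀ v ∈ rootSpace t (0 : Module.Dual F t), v - ((θ v) : g) ∈ n)
    (α β γ : Module.Dual F t) (δ σ : A2) (x : g)
    (hx : x ∈ Vsp t α β γ δ) (hc : Lfun t α β γ σ (θ (p x)) ≠ 0) :
    Module.finrank F (Vsp t α β γ σ) = Module.finrank F (Vsp t α β γ (σ + δ)) := by
  have hx0 := p_mem_rootSpace_zero hp hx
  set f : g →ₗ[F] g := (LieAlgebra.ad F g x : g →ₗ[F] g) with hf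
  have hfapp : ∀ v : g, f v = ⁅x, v⁆ := fun v => LieAlgebra.ad_apply F g x v
  have hmap1 : ∀ v ∈ Vsp t α β γ σ, f v ∈ Vsp t α β γ (σ + δ) := by
    intro v hv
    have hbr := rootSpace_bracket t hx hv
    have h2 : Lfun t α β γ δ + Lfun t α β γ σ = Lfun t α β γ (σ + δ) := by
      rw [← Lfun_add, add_comm]
    rw [hfapp]
    unfold Vsp
    rw [← h2]
    exact hbr
  have hinj1 : Function.Injective (f.restrict hmap1) := by
    rw [← LinearMap.ker_eq_bot, Submodule.eq_bot_iff]
    intro v hv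
    have hfv : f (v : g) = 0 := by
      have := congrArg (Subtype.val) (LinearMap.mem_ker.mp hv)
      simpa [LinearMap.restrict_apply] using this
    have hffv : ⁅x, ⁅x, (v : g)⁆⁆ = 0 := by
      rw [show ⁅x, (v : g)⁆ = f (v : g) from (hfapp _).symm, hfv, lie_zero]
    have h0 := root_inj hp hn θ hθsub hx0 v.2 hc hffv
    exact Subtype.ext h0
  have le1 : Module.finrank F (Vsp t α β γ σ) ≤ Module.finrank F (Vsp t α β γ (σ + δ)) :=
    LinearMap.finrank_le_finrank_of_injective hinj1
  have hidx : δ + (σ + δ) = σ := by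
    rw [add_comm σ δ]; exact A2_add_add_cancel δ σ
  have hc2 : Lfun t α β γ (σ + δ) (θ (p x)) ≠ 0 := by
    rw [Lfun_add, LinearMap.add_apply, Ztau hp hn θ hθsub hx, add_zero]
    exact hc
  have hmap2 : ∀ v ∈ Vsp t α β γ (σ + δ), f v ∈ Vsp t α β γ σ := by
    intro v hv
    have hbr := rootSpace_bracket t hx hv
    have h2 : Lfun t α β γ δ + Lfun t α β γ (σ + δ) = Lfun t α β γ σ := by
      rw [← Lfun_add, hidx]
    rw [hfapp]
    unfold Vsp
    rw [← h2]
    exact hbr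
  have hinj2 : Function.Injective (f.restrict hmap2) := by
    rw [← LinearMap.ker_eq_bot, Submodule.eq_bot_iff]
    intro v hv
    have hfv : f (v : g) = 0 := by
      have := congrArg (Subtype.val) (LinearMap.mem_ker.mp hv)
      simpa [LinearMap.restrict_apply] using this
    have hffv : ⁅x, ⁅x, (v : g)⁆⁆ = 0 := by
      rw [show ⁅x, (v : g)⁆ = f (v : g) from (hfapp _).symm, hfv, lie_zero]
    have h0 := root_inj hp hn θ hθsub hx0 v.2 hc2 hffv
    exact Subtype.ext h0
  have le2 : Module.finrank F (Vsp t α β γ (σ + δ)) ≤ Module.finrank F (Vsp t α β γ σ) :=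
    LinearMap.finrank_le_finrank_of_injective hinj2
  omega

end MainLemmas2

section Projection

variable {F : Type*} [Field F] [CharP F 2] {g : Type*} [LieRing g] [LieAlgebra F g]
variable {p : g → g} {t : LieSubalgebra F g}
variable {α β γ : Module.Dual F t} {t₁ t₂ t₃ : t}

lemma Lfun_t1 (hα : α t₁ = 1 ∧ α t₂ = 0 ∧ α t₃ = 0) (hβ : β t₁ = 0 ∧ β t₂ = 1 ∧ β t₃ = 0)
    (hγ : γ t₁ = 0 ∧ γ t₂ = 0 ∧ γ t₃ = 1) (ε : A2) : Lfun t α β γ ε t₁ = ccF F ε.1 := by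
  rw [Lfun_apply, hα.1, hβ.1, hγ.1]; ring

lemma Lfun_t2 (hα : α t₁ = 1 ∧ α t₂ = 0 ∧ α t₃ = 0) (hβ : β t₁ = 0 ∧ β t₂ = 1 ∧ β t₃ = 0)
    (hγ : γ t₁ = 0 ∧ γ t₂ = 0 ∧ γ t₃ = 1) (ε : A2) : Lfun t α β γ ε t₂ = ccF F ε.2.1 := by
  rw [Lfun_apply, hα.2.1, hβ.2.1, hγ.2.1]; ring

lemma Lfun_t3 (hα : α t₁ = 1 ∧ α t₂ = 0 ∧ α t₃ = 0) (hβ : β t₁ = 0 ∧ β t₂ = 1 ∧ β t₃ = 0)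
    (hγ : γ t₁ = 0 ∧ γ t₂ = 0 ∧ γ t₃ = 1) (ε : A2) : Lfun t α β γ ε t₃ = ccF F ε.2.2 := by
  rw [Lfun_apply, hα.2.2, hβ.2.2, hγ.2.2]; ring

lemma Lfun_ne_zero (hα : α t₁ = 1 ∧ α t₂ = 0 ∧ α t₃ = 0) (hβ : β t₁ = 0 ∧ β t₂ = 1 ∧ β t₃ = 0)
    (hγ : γ t₁ = 0 ∧ γ t₂ = 0 ∧ γ t₃ = 1) {ε : A2} (hε : ε ≠ 0) : Lfun t α β γ ε ≠ 0 := by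
  intro h0
  apply hε
  have e1 : ccF F ε.1 = 0 := by rw [← Lfun_t1 hα hβ hγ ε, h0]; rfl
  have e2 : ccF F ε.2.1 = 0 := by rw [← Lfun_t2 hα hβ hγ ε, h0]; rfl
  have e3 : ccF F ε.2.2 = 0 := by rw [← Lfun_t3 hα hβ hγ ε, h0]; rfl
  have := (ccF_eq_zero_iff F _).mp e1
  have := (ccF_eq_zero_iff F _).mp e2
  have := (ccF_eq_zero_iff F _).mp e3
  ext <;> simp_all

lemma mem_Vsp_of_eigen (hspan : Submodule.span F ({t₁, t₂, t₃} : Set t) = ⊤)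
    (hα : α t₁ = 1 ∧ α t₂ = 0 ∧ α t₃ = 0) (hβ : β t₁ = 0 ∧ β t₂ = 1 ∧ β t₃ = 0)
    (hγ : γ t₁ = 0 ∧ γ t₂ = 0 ∧ γ t₃ = 1) {ε : A2} {v : g}
    (h1 : ⁅(t₁ : g), v⁆ = ccF F ε.1 • v)
    (h2 : ⁅(t₂ : g), v⁆ = ccF F ε.2.1 • v)
    (h3 : ⁅(t₃ : g), v⁆ = ccF F ε.2.2 • v) :
    v ∈ Vsp t α β γ ε := by
  set S : Submodule F t :=
    { carrier := {x : t | ⁅(x : g), v⁆ = Lfun t α β γ ε x • v}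
      add_mem' := by
        intro a b ha hb
        simp only [Set.mem_setOf_eq] at *
        rw [AddSubmonoid.coe_add, add_lie, ha, hb, map_add, add_smul]
      zero_mem' := by
        simp only [Set.mem_setOf_eq]
        rw [ZeroMemClass.coe_zero, zero_lie, map_zero, zero_smul]
      smul_mem' := by
        intro c x hx
        simp only [Set.mem_setOf_eq] at *
        rw [show ((c • x : t) : g) = c • (x : g) from rfl, smul_lie, hx, map_smul, smul_assoc] } with hS
  have hsub : ({t₁, t₂, t₃} : Set t) ⊆ S := by
    rintro x (rfl | rfl | rfl) <;> simp only [hS, Set.mem_setOf_eq, SetLike.mem_coe,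
      Submodule.mem_mk, AddSubmonoid.mem_mk, AddSubsemigroup.mem_mk]
    · rw [Lfun_t1 hα hβ hγ]; exact h1
    · rw [Lfun_t2 hα hβ hγ]; exact h2
    · rw [Lfun_t3 hα hβ hγ]; exact h3
  have htop : (⊤ : Submodule F t) ≤ S := by
    rw [← hspan]
    exact Submodule.span_le.mpr hsub
  intro s
  exact htop (Submodule.mem_top) 

end Projection

section Spanning

variable {F : Type*} [Field F] [CharP F 2] {g : Type*} [LieRing g] [LieAlgebra F g]
variable {p : g → g} {t : LieSubalgebra F g}
variable {α β γ : Module.Dual F t} {t₁ t₂ t₃ : t}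

lemma eig_helper (e q1 q2 q3 : Module.End F g) (c : F)
    (h3 : Commute e q3) (h2 : Commute e q2) (h1 : e * q1 = c • q1) (z : g) :
    e (q3 (q2 (q1 z))) = c • (q3 (q2 (q1 z))) := by
  have key : e * (q3 * (q2 * q1)) = c • (q3 * (q2 * q1)) := by
    rw [← mul_assoc e q3, h3.eq, mul_assoc q3 e, ← mul_assoc e q2, h2.eq, mul_assoc q2 e, h1,
      mul_smul_comm, mul_smul_comm]
  calc e (q3 (q2 (q1 z))) = (e * (q3 * (q2 * q1))) z := rfl
    _ = (c • (q3 * (q2 * q1))) z := by rw [key]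
    _ = c • (q3 (q2 (q1 z))) := rfl

lemma fac_one (e : Module.End F g) (he : e * e = e) : e * e = ccF F 1 • e := by
  rw [he, ccF_one, one_smul]

lemma fac_zero (e : Module.End F g) (he : e * e = e) : e * (1 + e) = ccF F 0 • (1 + e) := by
  rw [mul_add, mul_one, he, ccF_zero, zero_smul, char2_add_self F]

lemma E_idem (hp : IsTwoMap F p) {s : t} (htor : p (s : g) = (s : g)) :
    (LieAlgebra.ad F g (s : g)) * (LieAlgebra.ad F g (s : g)) = LieAlgebra.ad F g (s : g) := by
  rw [← sq, ← ad_p hp, htor]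

lemma E_comm {x y : g} (hxy : ⁅x, y⁆ = 0) :
    Commute (LieAlgebra.ad F g x) (LieAlgebra.ad F g y) := by
  show _ * _ = _ * _
  ext z
  simp only [Module.End.mul_apply, LieAlgebra.ad_apply]
  rw [leibniz_lie, hxy, zero_lie, zero_add]

lemma eig_helper_mid (e q1 q2 q3 : Module.End F g) (c : F)
    (h3 : Commute e q3) (h2 : e * q2 = c • q2) (z : g) :
    e (q3 (q2 (q1 z))) = c • (q3 (q2 (q1 z))) := by
  have key : e * (q3 * (q2 * q1)) = c • (q3 * (q2 * q1)) := by
    rw [← mul_assoc e q3, h3.eq, mul_assoc q3 e, ← mul_assoc e q2, h2, smul_mul_assoc,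
      mul_smul_comm]
  calc e (q3 (q2 (q1 z))) = (e * (q3 * (q2 * q1))) z := rfl
    _ = (c • (q3 * (q2 * q1))) z := by rw [key]
    _ = c • (q3 (q2 (q1 z))) := rfl

lemma eig_helper_out (e q1 q2 q3 : Module.End F g) (c : F)
    (h3 : e * q3 = c • q3) (z : g) :
    e (q3 (q2 (q1 z))) = c • (q3 (q2 (q1 z))) := by
  calc e (q3 (q2 (q1 z))) = (e * q3) (q2 (q1 z)) := rfl
    _ = (c • q3) (q2 (q1 z)) := by rw [h3]
    _ = c • (q3 (q2 (q1 z))) := rfl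

lemma Vsp_eig1 (hα : α t₁ = 1 ∧ α t₂ = 0 ∧ α t₃ = 0) (hβ : β t₁ = 0 ∧ β t₂ = 1 ∧ β t₃ = 0)
    (hγ : γ t₁ = 0 ∧ γ t₂ = 0 ∧ γ t₃ = 1) {ε : A2} {v : g} (hv : v ∈ Vsp t α β γ ε) :
    (LieAlgebra.ad F g (t₁ : g)) v = ccF F ε.1 • v := by
  have h := hv t₁
  rw [Lfun_t1 hα hβ hγ] at h
  rw [LieAlgebra.ad_apply]
  exact h

lemma Vsp_eig2 (hα : α t₁ = 1 ∧ α t₂ = 0 ∧ α t₃ = 0) (hβ : β t₁ = 0 ∧ β t₂ = 1 ∧ β t₃ = 0)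
    (hγ : γ t₁ = 0 ∧ γ t₂ = 0 ∧ γ t₃ = 1) {ε : A2} {v : g} (hv : v ∈ Vsp t α β γ ε) :
    (LieAlgebra.ad F g (t₂ : g)) v = ccF F ε.2.1 • v := by
  have h := hv t₂
  rw [Lfun_t2 hα hβ hγ] at h
  rw [LieAlgebra.ad_apply]
  exact h

lemma Vsp_eig3 (hα : α t₁ = 1 ∧ α t₂ = 0 ∧ α t₃ = 0) (hβ : β t₁ = 0 ∧ β t₂ = 1 ∧ β t₃ = 0)
    (hγ : γ t₁ = 0 ∧ γ t₂ = 0 ∧ γ t₃ = 1) {ε : A2} {v : g} (hv : v ∈ Vsp t α β γ ε) :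
    (LieAlgebra.ad F g (t₃ : g)) v = ccF F ε.2.2 • v := by
  have h := hv t₃
  rw [Lfun_t3 hα hβ hγ] at h
  rw [LieAlgebra.ad_apply]
  exact h

lemma span_V (hp : IsTwoMap F p)
    (hab12 : ⁅(t₁ : g), (t₂ : g)⁆ = 0) (hab13 : ⁅(t₁ : g), (t₃ : g)⁆ = 0)
    (hab23 : ⁅(t₂ : g), (t₃ : g)⁆ = 0)
    (htor1 : p (t₁ : g) = (t₁ : g)) (htor2 : p (t₂ : g) = (t₂ : g))
    (htor3 : p (t₃ : g) = (t₃ : g))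
    (hspan : Submodule.span F ({t₁, t₂, t₃} : Set t) = ⊤)
    (hα : α t₁ = 1 ∧ α t₂ = 0 ∧ α t₃ = 0) (hβ : β t₁ = 0 ∧ β t₂ = 1 ∧ β t₃ = 0)
    (hγ : γ t₁ = 0 ∧ γ t₂ = 0 ∧ γ t₃ = 1) (z : g) :
    z ∈ ⨆ ε : A2, Vsp t α β γ ε := by
  set E1 := LieAlgebra.ad F g (t₁ : g) with hE1
  set E2 := LieAlgebra.ad F g (t₂ : g) with hE2
  set E3 := LieAlgebra.ad F g (t₃ : g) with hE3
  have i1 : E1 * E1 = E1 := E_idem hp htor1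
  have i2 : E2 * E2 = E2 := E_idem hp htor2
  have i3 : E3 * E3 = E3 := E_idem hp htor3
  have c12 : Commute E1 E2 := E_comm hab12
  have c13 : Commute E1 E3 := E_comm hab13
  have c23 : Commute E2 E3 := E_comm hab23
  have d12 : Commute E1 (1 + E2) := (Commute.one_right E1).add_right c12
  have d13 : Commute E1 (1 + E3) := (Commute.one_right E1).add_right c13
  have d23 : Commute E2 (1 + E3) := (Commute.one_right E2).add_right c23
  have memb : ∀ (q1 q2 q3 : Module.End F g) (b1 b2 b3 : ZMod 2),
      E1 * q1 = ccF F b1 • q1 → E2 * q2 = ccF F b2 • q2 → E3 * q3 = ccF F b3 • q3 →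
      Commute E1 q2 → Commute E1 q3 → Commute E2 q3 →
      q3 (q2 (q1 z)) ∈ Vsp t α β γ (b1, b2, b3) := by
    intro q1 q2 q3 b1 b2 b3 f1 f2 f3 e12 e13 e23
    apply mem_Vsp_of_eigen hspan hα hβ hγ
    · have h := eig_helper E1 q1 q2 q3 (ccF F b1) e13 e12 f1 z
      rw [← LieAlgebra.ad_apply F g (t₁ : g), ← hE1]
      exact h
    · have h := eig_helper_mid E2 q1 q2 q3 (ccF F b2) e23 f2 z
      rw [← LieAlgebra.ad_apply F g (t₂ : g), ← hE2]
      exact h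
    · have h := eig_helper_out E3 q1 q2 q3 (ccF F b3) f3 z
      rw [← LieAlgebra.ad_apply F g (t₃ : g), ← hE3]
      exact h
  have split : ∀ (e : Module.End F g) (u : g), u = (1 + e) u + e u := by
    intro e u
    rw [LinearMap.add_apply, Module.End.one_apply, add_assoc, char2_add_self F, add_zero]
  set B1 : Module.End F g := 1 + E1 with hB1
  set B2 : Module.End F g := 1 + E2 with hB2
  set B3 : Module.End F g := 1 + E3 with hB3
  have hz : z = ((B3 (B2 (B1 z)) + E3 (B2 (B1 z))) + (B3 (E2 (B1 z)) + E3 (E2 (B1 z)))) +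
      ((B3 (B2 (E1 z)) + E3 (B2 (E1 z))) + (B3 (E2 (E1 z)) + E3 (E2 (E1 z)))) := by
    calc z = B1 z + E1 z := split E1 z
      _ = (B2 (B1 z) + E2 (B1 z)) + (B2 (E1 z) + E2 (E1 z)) := by
          rw [← split E2 (B1 z), ← split E2 (E1 z)]
      _ = ((B3 (B2 (B1 z)) + E3 (B2 (B1 z))) + (B3 (E2 (B1 z)) + E3 (E2 (B1 z)))) +
          ((B3 (B2 (E1 z)) + E3 (B2 (E1 z))) + (B3 (E2 (E1 z)) + E3 (E2 (E1 z)))) := by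
          rw [← split E3 (B2 (B1 z)), ← split E3 (E2 (B1 z)), ← split E3 (B2 (E1 z)),
            ← split E3 (E2 (E1 z))]
  rw [hz]
  have m1 := memb B1 B2 B3 0 0 0 (fac_zero E1 i1) (fac_zero E2 i2) (fac_zero E3 i3) d12 d13 d23
  have m2 := memb B1 B2 E3 0 0 1 (fac_zero E1 i1) (fac_zero E2 i2) (fac_one E3 i3) d12 c13 c23
  have m3 := memb B1 E2 B3 0 1 0 (fac_zero E1 i1) (fac_one E2 i2) (fac_zero E3 i3) c12 d13 d23
  have m4 := memb B1 E2 E3 0 1 1 (fac_zero E1 i1) (fac_one E2 i2) (fac_one E3 i3) c12 c13 c23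
  have m5 := memb E1 B2 B3 1 0 0 (fac_one E1 i1) (fac_zero E2 i2) (fac_zero E3 i3) d12 d13 d23
  have m6 := memb E1 B2 E3 1 0 1 (fac_one E1 i1) (fac_zero E2 i2) (fac_one E3 i3) d12 c13 c23
  have m7 := memb E1 E2 B3 1 1 0 (fac_one E1 i1) (fac_one E2 i2) (fac_zero E3 i3) c12 d13 d23
  have m8 := memb E1 E2 E3 1 1 1 (fac_one E1 i1) (fac_one E2 i2) (fac_one E3 i3) c12 c13 c23
  refine Submodule.add_mem _ (Submodule.add_mem _ (Submodule.add_mem _ ?_ ?_)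
    (Submodule.add_mem _ ?_ ?_)) (Submodule.add_mem _ (Submodule.add_mem _ ?_ ?_)
    (Submodule.add_mem _ ?_ ?_))
  · exact Submodule.mem_iSup_of_mem ((0 : ZMod 2), (0 : ZMod 2), (0 : ZMod 2)) m1
  · exact Submodule.mem_iSup_of_mem ((0 : ZMod 2), (0 : ZMod 2), (1 : ZMod 2)) m2
  · exact Submodule.mem_iSup_of_mem ((0 : ZMod 2), (1 : ZMod 2), (0 : ZMod 2)) m3
  · exact Submodule.mem_iSup_of_mem ((0 : ZMod 2), (1 : ZMod 2), (1 : ZMod 2)) m4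
  · exact Submodule.mem_iSup_of_mem ((1 : ZMod 2), (0 : ZMod 2), (0 : ZMod 2)) m5
  · exact Submodule.mem_iSup_of_mem ((1 : ZMod 2), (0 : ZMod 2), (1 : ZMod 2)) m6
  · exact Submodule.mem_iSup_of_mem ((1 : ZMod 2), (1 : ZMod 2), (0 : ZMod 2)) m7
  · exact Submodule.mem_iSup_of_mem ((1 : ZMod 2), (1 : ZMod 2), (1 : ZMod 2)) m8

end Spanning

section P0sec

variable {F : Type*} [Field F] [CharP F 2] {g : Type*} [LieRing g] [LieAlgebra F g]
variable {p : g → g} {t : LieSubalgebra F g}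
variable {α β γ : Module.Dual F t} {t₁ t₂ t₃ : t}

variable (F) in
/-- the projection onto the zero weight space -/
def P0End (x1 x2 x3 : g) : Module.End F g :=
  (1 + LieAlgebra.ad F g x1) * ((1 + LieAlgebra.ad F g x2) * (1 + LieAlgebra.ad F g x3))

lemma Vsp_zero : Vsp t α β γ (0 : A2) = rootSpace t (0 : Module.Dual F t) := by
  unfold Vsp
  rw [Lfun_zero]

lemma P0_fix (hα : α t₁ = 1 ∧ α t₂ = 0 ∧ α t₃ = 0) (hβ : β t₁ = 0 ∧ β t₂ = 1 ∧ β t₃ = 0)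
    (hγ : γ t₁ = 0 ∧ γ t₂ = 0 ∧ γ t₃ = 1) {v : g} (hv : v ∈ Vsp t α β γ (0 : A2)) :
    P0End F (t₁ : g) (t₂ : g) (t₃ : g) v = v := by
  have h1 : LieAlgebra.ad F g (t₁ : g) v = 0 := by
    rw [Vsp_eig1 hα hβ hγ hv]
    show ccF F 0 • v = 0
    rw [ccF_zero, zero_smul]
  have h2 : LieAlgebra.ad F g (t₂ : g) v = 0 := by
    rw [Vsp_eig2 hα hβ hγ hv]
    show ccF F 0 • v = 0
    rw [ccF_zero, zero_smul]
  have h3 : LieAlgebra.ad F g (t₃ : g) v = 0 := by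
    rw [Vsp_eig3 hα hβ hγ hv]
    show ccF F 0 • v = 0
    rw [ccF_zero, zero_smul]
  have k3 : (1 + LieAlgebra.ad F g (t₃ : g)) v = v := by
    rw [LinearMap.add_apply, Module.End.one_apply, h3, add_zero]
  have k2 : (1 + LieAlgebra.ad F g (t₂ : g)) v = v := by
    rw [LinearMap.add_apply, Module.End.one_apply, h2, add_zero]
  have k1 : (1 + LieAlgebra.ad F g (t₁ : g)) v = v := by
    rw [LinearMap.add_apply, Module.End.one_apply, h1, add_zero]
  show (1 + LieAlgebra.ad F g (t₁ : g))
    ((1 + LieAlgebra.ad F g (t₂ : g)) ((1 + LieAlgebra.ad F g (t₃ : g)) v)) = v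
  rw [k3, k2, k1]

lemma P0_kill (hab12 : ⁅(t₁ : g), (t₂ : g)⁆ = 0) (hab13 : ⁅(t₁ : g), (t₃ : g)⁆ = 0)
    (hab23 : ⁅(t₂ : g), (t₃ : g)⁆ = 0)
    (hα : α t₁ = 1 ∧ α t₂ = 0 ∧ α t₃ = 0) (hβ : β t₁ = 0 ∧ β t₂ = 1 ∧ β t₃ = 0)
    (hγ : γ t₁ = 0 ∧ γ t₂ = 0 ∧ γ t₃ = 1) {ε : A2} (hε : ε ≠ 0) {v : g}
    (hv : v ∈ Vsp t α β γ ε) :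
    P0End F (t₁ : g) (t₂ : g) (t₃ : g) v = 0 := by
  set E1 := LieAlgebra.ad F g (t₁ : g) with hE1
  set E2 := LieAlgebra.ad F g (t₂ : g) with hE2
  set E3 := LieAlgebra.ad F g (t₃ : g) with hE3
  have c12 : Commute E1 E2 := E_comm hab12
  have c13 : Commute E1 E3 := E_comm hab13
  have c23 : Commute E2 E3 := E_comm hab23
  have d12 : Commute (1 + E1) (1 + E2) :=
    Commute.add_left (Commute.one_left _) ((Commute.one_right E1).add_right c12)
  have d13 : Commute (1 + E1) (1 + E3) :=
    Commute.add_left (Commute.one_left _) ((Commute.one_right E1).add_right c13)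
  have d23 : Commute (1 + E2) (1 + E3) :=
    Commute.add_left (Commute.one_left _) ((Commute.one_right E2).add_right c23)
  rcases A2_ne_zero_coord ε hε with h | h | h
  · have e1 : E1 v = v := by rw [Vsp_eig1 hα hβ hγ hv, h, ccF_one, one_smul]
    have k1 : (1 + E1) v = 0 := by
      rw [LinearMap.add_apply, Module.End.one_apply, e1, char2_add_self F]
    have hcom : Commute (1 + E1) ((1 + E2) * (1 + E3)) := d12.mul_right d13
    calc P0End F (t₁ : g) (t₂ : g) (t₃ : g) v = ((1 + E1) * ((1 + E2) * (1 + E3))) v := rfl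
      _ = (((1 + E2) * (1 + E3)) * (1 + E1)) v := by rw [hcom.eq]
      _ = ((1 + E2) * (1 + E3)) ((1 + E1) v) := rfl
      _ = 0 := by rw [k1, map_zero]
  · have e2 : E2 v = v := by rw [Vsp_eig2 hα hβ hγ hv, h, ccF_one, one_smul]
    have k2 : (1 + E2) v = 0 := by
      rw [LinearMap.add_apply, Module.End.one_apply, e2, char2_add_self F]
    calc P0End F (t₁ : g) (t₂ : g) (t₃ : g) v = (1 + E1) (((1 + E2) * (1 + E3)) v) := rfl
      _ = (1 + E1) (((1 + E3) * (1 + E2)) v) := by rw [d23.eq]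
      _ = (1 + E1) ((1 + E3) ((1 + E2) v)) := rfl
      _ = 0 := by rw [k2, map_zero, map_zero]
  · have e3 : E3 v = v := by rw [Vsp_eig3 hα hβ hγ hv, h, ccF_one, one_smul]
    have k3 : (1 + E3) v = 0 := by
      rw [LinearMap.add_apply, Module.End.one_apply, e3, char2_add_self F]
    show (1 + E1) ((1 + E2) ((1 + E3) v)) = 0
    rw [k3, map_zero, map_zero]

end P0sec

section Gsec

variable {F : Type*} [Field F] [CharP F 2] {g : Type*} [LieRing g] [LieAlgebra F g]
variable {p : g → g} {t : LieSubalgebra F g} {n : Submodule F g}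
variable {α β γ : Module.Dual F t} {t₁ t₂ t₃ : t}

lemma Glem [FiniteDimensional F g] (hp : IsTwoMap F p)
    (hsimple : ∀ I : LieIdeal F g, I = ⊥ ∨ I = ⊤)
    (hn : ∀ x : g, x ∈ n ↔ x ∈ rootSpace t 0 ∧ IsTwoNilpotent p x)
    (θ : g →ₗ[F] t) (hθt : ∀ s : t, θ (s : g) = s)
    (hθsub : ∀ v ∈ rootSpace t (0 : Module.Dual F t), v - ((θ v) : g) ∈ n)
    (ht0 : ∀ s : t, (s : g) ∈ rootSpace t (0 : Module.Dual F t))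
    (hab12 : ⁅(t₁ : g), (t₂ : g)⁆ = 0) (hab13 : ⁅(t₁ : g), (t₃ : g)⁆ = 0)
    (hab23 : ⁅(t₂ : g), (t₃ : g)⁆ = 0)
    (htor1 : p (t₁ : g) = (t₁ : g)) (htor2 : p (t₂ : g) = (t₂ : g))
    (htor3 : p (t₃ : g) = (t₃ : g))
    (hspan : Submodule.span F ({t₁, t₂, t₃} : Set t) = ⊤)
    (hα : α t₁ = 1 ∧ α t₂ = 0 ∧ α t₃ = 0) (hβ : β t₁ = 0 ∧ β t₂ = 1 ∧ β t₃ = 0)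
    (hγ : γ t₁ = 0 ∧ γ t₂ = 0 ∧ γ t₃ = 1)
    (hdimt : Module.finrank F t = 3)
    (χ : A2) (hχ : χ ≠ 0) (ψ : Module.Dual F t) (hψ : ψ ≠ 0) :
    ∃ (η : A2) (x : g), dotA χ η = 1 ∧ x ∈ Vsp t α β γ η ∧ ψ (θ (p x)) ≠ 0 := by
  by_contra hcon
  push_neg at hcon
  set g1 : Submodule F g := ⨆ η : {η : A2 // dotA χ η = 1}, Vsp t α β γ (η : A2) with hg1
  set g0' : Submodule F g := ⨆ η : {η : A2 // dotA χ η = 0}, Vsp t α β γ (η : A2) with hg0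
  set BS : Set g := {z | ∃ x ∈ g1, ∃ y ∈ g1, z = ⁅x, y⁆} with hBS
  set B : Submodule F g := Submodule.span F BS with hB
  have memg1 : ∀ {η : A2} {x : g}, dotA χ η = 1 → x ∈ Vsp t α β γ η → x ∈ g1 := by
    intro η x h hx
    exact Submodule.mem_iSup_of_mem (⟨η, h⟩ : {η : A2 // dotA χ η = 1}) hx
  have memg0 : ∀ {η : A2} {x : g}, dotA χ η = 0 → x ∈ Vsp t α β γ η → x ∈ g0' := by
    intro η x h hx
    exact Submodule.mem_iSup_of_mem (⟨η, h⟩ : {η : A2 // dotA χ η = 0}) hx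
  have bracketV : ∀ {lam mu : A2} {v w : g}, v ∈ Vsp t α β γ lam → w ∈ Vsp t α β γ mu →
      ⁅v, w⁆ ∈ Vsp t α β γ (lam + mu) := by
    intro lam mu v w hv hw
    have h := rootSpace_bracket t hv hw
    unfold Vsp
    rw [Lfun_add]
    exact h
  have lie01 : ∀ (lam : A2), dotA χ lam = 0 → ∀ v ∈ Vsp t α β γ lam, ∀ w ∈ g1,
      ⁅v, w⁆ ∈ g1 := by
    intro lam hlam v hv w hw
    refine Submodule.iSup_induction (motive := fun w => ⁅v, w⁆ ∈ g1) _ hw ?_ ?_ ?_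
    · rintro ⟨η, hη⟩ x hx
      refine memg1 ?_ (bracketV hv hx)
      rw [dotA_add, hlam, hη, zero_add]
    · beta_reduce; rw [lie_zero]; exact zero_mem _
    · intro a b ha hb; beta_reduce; rw [lie_add]; exact add_mem ha hb
  have lie10 : ∀ (lam : A2), dotA χ lam = 1 → ∀ v ∈ Vsp t α β γ lam, ∀ w ∈ g0',
      ⁅v, w⁆ ∈ g1 := by
    intro lam hlam v hv w hw
    refine Submodule.iSup_induction (motive := fun w => ⁅v, w⁆ ∈ g1) _ hw ?_ ?_ ?_
    · rintro ⟨η, hη⟩ x hx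
      refine memg1 ?_ (bracketV hv hx)
      rw [dotA_add, hlam, hη, add_zero]
    · beta_reduce; rw [lie_zero]; exact zero_mem _
    · intro a b ha hb; beta_reduce; rw [lie_add]; exact add_mem ha hb
  have Bg0 : ∀ x ∈ g1, ∀ y ∈ g1, ⁅x, y⁆ ∈ g0' := by
    intro x hx
    refine Submodule.iSup_induction (motive := fun x => ∀ y ∈ g1, ⁅x, y⁆ ∈ g0') _ hx ?_ ?_ ?_
    · rintro ⟨η, hη⟩ x hxη y hy
      refine Submodule.iSup_induction (motive := fun y => ⁅x, y⁆ ∈ g0') _ hy ?_ ?_ ?_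
      · rintro ⟨η', hη'⟩ y hyη'
        refine memg0 ?_ (bracketV hxη hyη')
        rw [dotA_add, hη, hη']
        decide
      · beta_reduce; rw [lie_zero]; exact zero_mem _
      · intro a b ha hb; beta_reduce; rw [lie_add]; exact add_mem ha hb
    · intro y hy; beta_reduce; rw [zero_lie]; exact zero_mem _
    · intro a b ha hb y hy; beta_reduce; rw [add_lie]; exact add_mem (ha y hy) (hb y hy)
  set J : Submodule F g := g1 ⊔ B with hJ
  have lieJ_comp : ∀ (lam : A2) (v : g), v ∈ Vsp t α β γ lam → ∀ w ∈ J, ⁅v, w⁆ ∈ J := by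
    intro lam v hv w hw
    obtain ⟨w1, hw1, wb, hwb, rfl⟩ := Submodule.mem_sup.mp hw
    rw [lie_add]
    rcases zmod2_cases (dotA χ lam) with hd | hd
    · refine add_mem (Submodule.mem_sup_left (lie01 lam hd v hv w1 hw1)) ?_
      refine Submodule.span_induction (p := fun u _ => ⁅v, u⁆ ∈ J) ?_ ?_ ?_ ?_ hwb
      · rintro u ⟨x, hx, y, hy, rfl⟩
        beta_reduce
        rw [leibniz_lie]
        refine add_mem ?_ ?_
        · exact Submodule.mem_sup_right
            (Submodule.subset_span ⟨⁅v, x⁆, lie01 lam hd v hv x hx, y, hy, rfl⟩)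
        · exact Submodule.mem_sup_right
            (Submodule.subset_span ⟨x, hx, ⁅v, y⁆, lie01 lam hd v hv y hy, rfl⟩)
      · beta_reduce; rw [lie_zero]; exact zero_mem _
      · intro a b _ _ ha hb; beta_reduce; rw [lie_add]; exact add_mem ha hb
      · intro c a _ ha; beta_reduce; rw [lie_smul]; exact Submodule.smul_mem _ c ha
    · have hvg1 : v ∈ g1 := memg1 hd hv
      refine add_mem (Submodule.mem_sup_right (Submodule.subset_span ⟨v, hvg1, w1, hw1, rfl⟩)) ?_
      refine Submodule.span_induction (p := fun u _ => ⁅v, u⁆ ∈ J) ?_ ?_ ?_ ?_ hwb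
      · rintro u ⟨x, hx, y, hy, rfl⟩
        beta_reduce
        exact Submodule.mem_sup_left (lie10 lam hd v hv _ (Bg0 x hx y hy))
      · beta_reduce; rw [lie_zero]; exact zero_mem _
      · intro a b _ _ ha hb; beta_reduce; rw [lie_add]; exact add_mem ha hb
      · intro c a _ ha; beta_reduce; rw [lie_smul]; exact Submodule.smul_mem _ c ha
  have lieJ : ∀ (z w : g), w ∈ J → ⁅z, w⁆ ∈ J := by
    intro z w hw
    have hz := span_V hp hab12 hab13 hab23 htor1 htor2 htor3 hspan hα hβ hγ z
    refine Submodule.iSup_induction (motive := fun z => ⁅z, w⁆ ∈ J) _ hz ?_ ?_ ?_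
    · intro ε x hx; exact lieJ_comp ε x hx w hw
    · beta_reduce; rw [zero_lie]; exact zero_mem _
    · intro a b ha hb; beta_reduce; rw [add_lie]; exact add_mem ha hb
  set JL : LieIdeal F g := ⟨J, fun {x m} hm => lieJ x m hm⟩ with hJL
  have memJL : ∀ {z : g}, z ∈ JL ↔ z ∈ J := fun {z} => Iff.rfl
  rcases hsimple JL with hbot | htop
  · -- the even part is zero; find a central element
    have hg1bot : ∀ (η : A2), dotA χ η = 1 → ∀ v ∈ Vsp t α β γ η, v = (0 : g) := by
      intro η hη v hv
      have h1 : v ∈ JL := memJL.mpr (Submodule.mem_sup_left (memg1 hη hv))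
      rw [hbot] at h1
      exact (LieSubmodule.mem_bot _).mp h1
    obtain ⟨a, b, hda, hdb, hcover⟩ := A2_subgroup_struct χ hχ
    set φab : t →ₗ[F] F × F := LinearMap.prod (Lfun t α β γ a) (Lfun t α β γ b) with hφab
    have hker : LinearMap.ker φab ≠ ⊥ := by
      intro hk
      have h1 := LinearMap.finrank_range_add_finrank_ker φab
      rw [hk, finrank_bot, add_zero, hdimt] at h1
      have h2 : Module.finrank F (LinearMap.range φab) ≤ Module.finrank F (F × F) :=
        Submodule.finrank_le _
      have h3 : Module.finrank F (F × F) = 2 := by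
        rw [Module.finrank_prod, Module.finrank_self]
      omega
    obtain ⟨s, hs_mem, hs_ne⟩ := (Submodule.ne_bot_iff _).mp hker
    have hsab : Lfun t α β γ a s = 0 ∧ Lfun t α β γ b s = 0 := by
      have h := LinearMap.mem_ker.mp hs_mem
      rw [hφab, LinearMap.prod_apply] at h
      exact ⟨congrArg Prod.fst h, congrArg Prod.snd h⟩
    have hLs : ∀ lam : A2, dotA χ lam = 0 → Lfun t α β γ lam s = 0 := by
      intro lam hlam
      rcases hcover lam hlam with rfl | rfl | rfl | rfl
      · rw [Lfun_zero]; rfl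
      · exact hsab.1
      · exact hsab.2
      · rw [Lfun_add, LinearMap.add_apply, hsab.1, hsab.2, add_zero]
    have hcent : ∀ z : g, ⁅z, (s : g)⁆ = 0 := by
      intro z
      have hz := span_V hp hab12 hab13 hab23 htor1 htor2 htor3 hspan hα hβ hγ z
      refine Submodule.iSup_induction (motive := fun z => ⁅z, (s : g)⁆ = 0) _ hz ?_ ?_ ?_
      · intro ε v hvε
        beta_reduce
        rcases zmod2_cases (dotA χ ε) with hd | hd
        · have h1 : ⁅(s : g), v⁆ = Lfun t α β γ ε s • v := hvε s
          rw [← lie_skew, h1, hLs ε hd, zero_smul, neg_zero]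
        · rw [hg1bot ε hd v hvε, zero_lie]
      · exact zero_lie _
      · intro a' b' ha hb; beta_reduce; rw [add_lie, ha, hb, add_zero]
    set K : Submodule F g := Submodule.span F {(s : g)} with hK
    have lieK : ∀ {z w : g}, w ∈ K → ⁅z, w⁆ ∈ K := by
      intro z w hw
      obtain ⟨c, rfl⟩ := Submodule.mem_span_singleton.mp hw
      rw [lie_smul, hcent z, smul_zero]; exact zero_mem _
    set KL : LieIdeal F g := ⟨K, fun {x m} hm => lieK hm⟩ with hKL
    have hs0 : (s : g) ≠ 0 := fun h => hs_ne (by exact_mod_cast h)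
    rcases hsimple KL with hKbot | hKtop
    · have h1 : (s : g) ∈ KL := Submodule.mem_span_singleton_self _
      rw [hKbot] at h1
      exact hs0 ((LieSubmodule.mem_bot _).mp h1)
    · have hKtop' : K = ⊤ := by
        rw [Submodule.eq_top_iff']
        intro x
        have h1 : x ∈ KL := by rw [hKtop]; exact LieSubmodule.mem_top _
        exact h1
      have h1 : Module.finrank F K = 1 := finrank_span_singleton hs0
      rw [hKtop', finrank_top] at h1
      have e : t.toSubmodule ≃ₗ[F] t :=
        { toFun := fun x => ⟨x.1, x.2⟩
          invFun := fun x => ⟨x.1, x.2⟩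
          map_add' := fun _ _ => rfl
          map_smul' := fun _ _ => rfl
          left_inv := fun _ => rfl
          right_inv := fun _ => rfl }
      have h2 : Module.finrank F t.toSubmodule = 3 := by
        rw [e.finrank_eq, hdimt]
      have h3 : Module.finrank F t.toSubmodule ≤ Module.finrank F g := Submodule.finrank_le _
      omega
  · -- J = ⊤  : contradiction via the functional Φ
    obtain ⟨v, hv⟩ : ∃ v : t, ψ v ≠ 0 := by
      by_contra hno
      push_neg at hno
      exact hψ (LinearMap.ext fun x => by rw [hno x]; rfl)
    set Φ : g →ₗ[F] F := ψ ∘ₗ (θ ∘ₗ (P0End F (t₁ : g) (t₂ : g) (t₃ : g))) with hΦ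
    have hker_g1 : g1 ≤ LinearMap.ker Φ := by
      refine iSup_le ?_
      rintro ⟨η, hη⟩ x hx
      have hη0 : η ≠ 0 := by
        intro h0
        rw [h0, dotA_zero] at hη
        exact absurd hη (by decide)
      have hP : P0End F (t₁ : g) (t₂ : g) (t₃ : g) x = 0 :=
        P0_kill hab12 hab13 hab23 hα hβ hγ hη0 hx
      rw [LinearMap.mem_ker, hΦ, LinearMap.comp_apply, LinearMap.comp_apply, hP, map_zero,
        map_zero]
    have keyB : ∀ x ∈ g1, ∀ y ∈ g1, Φ ⁅x, y⁆ = 0 := by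
      intro x hx
      refine Submodule.iSup_induction (motive := fun x => ∀ y ∈ g1, Φ ⁅x, y⁆ = 0) _ hx ?_ ?_ ?_
      · rintro ⟨η, hη⟩ x hxη y hy
        beta_reduce
        refine Submodule.iSup_induction (motive := fun y => Φ ⁅x, y⁆ = 0) _ hy ?_ ?_ ?_
        · rintro ⟨η', hη'⟩ y hyη'
          beta_reduce
          by_cases hee : η' = η
          · subst hee
            have hbr : ⁅x, y⁆ ∈ Vsp t α β γ (0 : A2) := by
              have h := bracketV hxη hyη'
              rwa [A2_add_self] at h
            have hP : P0End F (t₁ : g) (t₂ : g) (t₃ : g) ⁅x, y⁆ = ⁅x, y⁆ :=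
              P0_fix hα hβ hγ hbr
            have hlie : ⁅x, y⁆ = p (x + y) - p x - p y := by
              rw [hp.add_pow x y]; abel
            rw [hΦ, LinearMap.comp_apply, LinearMap.comp_apply, hP, hlie, map_sub, map_sub,
              map_sub, map_sub]
            rw [hcon η' (x + y) hη' (add_mem hxη hyη'), hcon η' x hη' hxη, hcon η' y hη' hyη']
            simp
          · have hne0 : η + η' ≠ 0 := by
              intro h0
              apply hee
              have h2 := A2_add_add_cancel η η'
              rw [h0, add_zero] at h2
              exact h2.symm
            have hbr : ⁅x, y⁆ ∈ Vsp t α β γ (η + η') := bracketV hxη hyη'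
            have hP : P0End F (t₁ : g) (t₂ : g) (t₃ : g) ⁅x, y⁆ = 0 :=
              P0_kill hab12 hab13 hab23 hα hβ hγ hne0 hbr
            rw [hΦ, LinearMap.comp_apply, LinearMap.comp_apply, hP, map_zero, map_zero]
        · beta_reduce; rw [lie_zero, map_zero]
        · intro a' b' ha hb; beta_reduce; rw [lie_add, map_add, ha, hb, add_zero]
      · intro y hy; beta_reduce; rw [zero_lie, map_zero]
      · intro a' b' ha hb y hy; beta_reduce; rw [add_lie, map_add, ha y hy, hb y hy, add_zero]
    have hkerB : B ≤ LinearMap.ker Φ := by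
      rw [hB]
      refine Submodule.span_le.mpr ?_
      rintro z ⟨x, hx, y, hy, rfl⟩
      exact LinearMap.mem_ker.mpr (keyB x hx y hy)
    have hJker : J ≤ LinearMap.ker Φ := sup_le hker_g1 hkerB
    have hvJ : (v : g) ∈ J := by
      have h1 : (v : g) ∈ JL := by rw [htop]; exact LieSubmodule.mem_top _
      exact memJL.mp h1
    have hΦv : Φ (v : g) = 0 := hJker hvJ
    have hP0v : P0End F (t₁ : g) (t₂ : g) (t₃ : g) (v : g) = (v : g) := by
      refine P0_fix hα hβ hγ ?_
      rw [Vsp_zero]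
      exact ht0 v
    rw [hΦ, LinearMap.comp_apply, LinearMap.comp_apply, hP0v, hθt v] at hΦv
    exact hv hΦv

end Gsec

theorem main_aux
    {F : Type*} [Field F] [CharP F 2]
    {g : Type*} [LieRing g] [LieAlgebra F g] [FiniteDimensional F g]
    (p : g → g) (hp : IsTwoMap F p)
    (hsimple : ∀ I : LieIdeal F g, I = ⊥ ∨ I = ⊤)
    (t : LieSubalgebra F g) (n : Submodule F g)
    (hn : ∀ x : g, x ∈ n ↔ x ∈ rootSpace t 0 ∧ IsTwoNilpotent p x)
    (hdecomp : rootSpace t 0 = t.toSubmodule ⊔ n)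
    (hdisj : Disjoint t.toSubmodule n)
    (hdimt : Module.finrank F t = 3)
    (t₁ t₂ t₃ : t)
    (htor1 : p (t₁ : g) = (t₁ : g)) (htor2 : p (t₂ : g) = (t₂ : g))
    (htor3 : p (t₃ : g) = (t₃ : g))
    (hspan : Submodule.span F ({t₁, t₂, t₃} : Set t) = ⊤)
    (α β γ : Module.Dual F t)
    (hα : α t₁ = 1 ∧ α t₂ = 0 ∧ α t₃ = 0)
    (hβ : β t₁ = 0 ∧ β t₂ = 1 ∧ β t₃ = 0)
    (hγ : γ t₁ = 0 ∧ γ t₂ = 0 ∧ γ t₃ = 1) :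
    ∀ ε ε' : A2, ε ≠ 0 → ε' ≠ 0 →
      Module.finrank F (Vsp t α β γ ε) = Module.finrank F (Vsp t α β γ ε') := by
  classical
  have ht0 : ∀ s : t, (s : g) ∈ rootSpace t (0 : Module.Dual F t) := by
    intro s
    rw [hdecomp]
    exact Submodule.mem_sup_left s.2
  have hzero0 : ∀ (x : t) (v : g), v ∈ rootSpace t (0 : Module.Dual F t) → ⁅(x : g), v⁆ = 0 := by
    intro x v hv
    rw [hv x]
    simp
  have hab12 : ⁅(t₁ : g), (t₂ : g)⁆ = 0 := hzero0 t₁ _ (ht0 t₂)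
  have hab13 : ⁅(t₁ : g), (t₃ : g)⁆ = 0 := hzero0 t₁ _ (ht0 t₃)
  have hab23 : ⁅(t₂ : g), (t₃ : g)⁆ = 0 := hzero0 t₂ _ (ht0 t₃)
  -- construct the projection θ : g → t
  obtain ⟨W, hW⟩ := Submodule.exists_isCompl (rootSpace t (0 : Module.Dual F t))
  have hncle : n ≤ rootSpace t (0 : Module.Dual F t) := by rw [hdecomp]; exact le_sup_right
  have htle : t.toSubmodule ≤ rootSpace t (0 : Module.Dual F t) := by
    rw [hdecomp]; exact le_sup_left
  have hcompl : IsCompl t.toSubmodule (n ⊔ W) := by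
    constructor
    · rw [Submodule.disjoint_def]
      intro x hxt hxnw
      obtain ⟨m, hm, w, hw, hsum⟩ := Submodule.mem_sup.mp hxnw
      have hwv : w ∈ rootSpace t (0 : Module.Dual F t) := by
        have hxw : w = x - m := by rw [← hsum]; abel
        rw [hxw]
        exact Submodule.sub_mem _ (htle hxt) (hncle hm)
      have hw0 : w = 0 := (Submodule.disjoint_def.mp hW.disjoint) w hwv hw
      have hxm : x = m := by rw [← hsum, hw0, add_zero]
      exact (Submodule.disjoint_def.mp hdisj) x hxt (hxm ▸ hm)
    · rw [codisjoint_iff, ← sup_assoc, ← hdecomp]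
      exact codisjoint_iff.mp hW.codisjoint
  set θ0 := Submodule.projectionOnto _ _ hcompl with hθ0
  set ι : t.toSubmodule →ₗ[F] t :=
    { toFun := fun x => ⟨x.1, x.2⟩
      map_add' := fun _ _ => rfl
      map_smul' := fun _ _ => rfl } with hι
  set θ : g →ₗ[F] t := ι ∘ₗ θ0 with hθ
  have hθt : ∀ s : t, θ (s : g) = s := by
    intro s
    have h := Submodule.projectionOnto_apply_left hcompl (⟨s.1, s.2⟩ : t.toSubmodule)
    show ι (θ0 (s : g)) = s
    rw [show θ0 (s : g) = (⟨s.1, s.2⟩ : t.toSubmodule) from h]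
    rfl
  have hθsub : ∀ v ∈ rootSpace t (0 : Module.Dual F t), v - ((θ v) : g) ∈ n := by
    intro v hv
    have h1 : θ0 (v - ((θ0 v) : g)) = 0 := by
      rw [map_sub, Submodule.projectionOnto_apply_left hcompl (θ0 v), sub_self]
    have h2 : v - ((θ0 v) : g) ∈ n ⊔ W := by
      rw [← Submodule.ker_projectionOnto hcompl]
      exact LinearMap.mem_ker.mpr h1
    obtain ⟨m, hm, w, hw, hsum⟩ := Submodule.mem_sup.mp h2
    have hwmem : w ∈ rootSpace t (0 : Module.Dual F t) := by
      have hww : w = (v - ((θ0 v) : g)) - m := by rw [← hsum]; abel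
      rw [hww]
      exact Submodule.sub_mem _ (Submodule.sub_mem _ hv (htle (θ0 v).2)) (hncle hm)
    have hw0 : w = 0 := (Submodule.disjoint_def.mp hW.disjoint) w hwmem hw
    have hfin : v - ((θ0 v) : g) = m := by rw [← hsum, hw0, add_zero]
    show v - ((θ0 v) : g) ∈ n
    rw [hfin]
    exact hm
  -- the edge relation and its consequences
  have hedge : ∀ (a b : A2) (x : g), x ∈ Vsp t α β γ (a + b) →
      Lfun t α β γ a (θ (p x)) ≠ 0 →
      Module.finrank F (Vsp t α β γ a) = Module.finrank F (Vsp t α β γ b) := by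
    intro a b x hx hcne
    have h := dimE hp hn θ hθsub α β γ (a + b) a x hx hcne
    rwa [show a + (a + b) = b from A2_add_add_cancel a b] at h
  set Edge : A2 → A2 → Prop := fun a b =>
    ∃ x : g, x ∈ Vsp t α β γ (a + b) ∧ Lfun t α β γ a (θ (p x)) ≠ 0 with hEdgeDef
  have edge_dim : ∀ a b, Edge a b →
      Module.finrank F (Vsp t α β γ a) = Module.finrank F (Vsp t α β γ b) := by
    rintro a b ⟨x, hx, hc⟩
    exact hedge a b x hx hc
  have edge_symm : ∀ a b, Edge a b → Edge b a := by
    rintro a b ⟨x, hx, hc⟩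
    refine ⟨x, by rwa [add_comm b a], ?_⟩
    have hZ : Lfun t α β γ (a + b) (θ (p x)) = 0 := Ztau hp hn θ hθsub hx
    have hb : Lfun t α β γ b = Lfun t α β γ a + Lfun t α β γ (a + b) := by
      rw [← Lfun_add, A2_add_add_cancel]
    rw [hb, LinearMap.add_apply, hZ, add_zero]
    exact hc
  have edge_ne0 : ∀ a, ¬ Edge a 0 := by
    rintro a ⟨x, hx, hc⟩
    rw [add_zero] at hx
    exact hc (Ztau hp hn θ hθsub hx)
  have chain_dim : ∀ a b : A2, Relation.ReflTransGen Edge a b →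
      Module.finrank F (Vsp t α β γ a) = Module.finrank F (Vsp t α β γ b) := by
    intro a b h
    induction h with
    | refl => rfl
    | tail h1 e ih => exact ih.trans (edge_dim _ _ e)
  intro ε ε' hε hε'
  by_cases hR : Relation.ReflTransGen Edge ε ε'
  · exact chain_dim _ _ hR
  exfalso
  have hreach0 : ∀ μ : A2, Relation.ReflTransGen Edge ε μ → μ ≠ 0 := by
    intro μ h h0
    subst h0
    rcases Relation.ReflTransGen.cases_tail h with h1 | ⟨c, _, hc2⟩
    · exact hε h1.symm
    · exact edge_ne0 c hc2
  set Cs : Finset A2 := Finset.univ.filter (fun μ => Relation.ReflTransGen Edge ε μ) with hCs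
  set Ds : Finset A2 := Finset.univ.filter (fun μ : A2 => μ ≠ 0) with hDs
  have hCsub : Cs ⊆ Ds := by
    intro μ hμ
    rw [hCs, Finset.mem_filter] at hμ
    rw [hDs, Finset.mem_filter]
    exact ⟨Finset.mem_univ _, hreach0 μ hμ.2⟩
  have hcard : Cs.card + (Ds \ Cs).card = 7 := by
    have h1 := Finset.card_sdiff_of_subset hCsub
    have h2 := Finset.card_le_card hCsub
    have h3 : Ds.card = 7 := A2_card7
    omega
  obtain ⟨C, σ0, hσ0C, hCcard, hCne0, hclosed⟩ :
      ∃ (C : Finset A2) (σ0 : A2), σ0 ∈ C ∧ C.card ≤ 3 ∧ (∀ μ ∈ C, μ ≠ 0) ∧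
        (∀ ν : A2, Edge σ0 ν → ν ∈ C) := by
    by_cases hsz : Cs.card ≤ 3
    · refine ⟨Cs, ε, ?_, hsz, ?_, ?_⟩
      · rw [hCs, Finset.mem_filter]
        exact ⟨Finset.mem_univ _, Relation.ReflTransGen.refl⟩
      · intro μ hμ
        rw [hCs, Finset.mem_filter] at hμ
        exact hreach0 μ hμ.2
      · intro ν he
        rw [hCs, Finset.mem_filter]
        exact ⟨Finset.mem_univ _, Relation.ReflTransGen.tail Relation.ReflTransGen.refl he⟩
    · refine ⟨Ds \ Cs, ε', ?_, by omega, ?_, ?_⟩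
      · rw [Finset.mem_sdiff]
        constructor
        · rw [hDs, Finset.mem_filter]; exact ⟨Finset.mem_univ _, hε'⟩
        · rw [hCs, Finset.mem_filter]
          rintro ⟨-, h⟩
          exact hR h
      · intro μ hμ
        rw [Finset.mem_sdiff, hDs, Finset.mem_filter] at hμ
        exact hμ.1.2
      · intro ν he
        rw [Finset.mem_sdiff]
        constructor
        · rw [hDs, Finset.mem_filter]
          refine ⟨Finset.mem_univ _, ?_⟩
          intro h0
          subst h0
          exact edge_ne0 ε' he
        · rw [hCs, Finset.mem_filter]
          rintro ⟨-, hRν⟩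
          exact hR (hRν.tail (edge_symm ε' ν he))
  have hDcard : ((C.erase σ0).image (fun μ => σ0 + μ)).card ≤ 2 := by
    have h1 := Finset.card_image_le (s := C.erase σ0) (f := fun μ => σ0 + μ)
    have h2 := Finset.card_erase_of_mem hσ0C
    omega
  obtain ⟨d1, d2, hcover⟩ := fin2cover _ hDcard
  obtain ⟨χ, hχ0, hχ1, hχ2⟩ := A2_perp_exists d1 d2
  have hLσ0 : Lfun t α β γ σ0 ≠ 0 := Lfun_ne_zero hα hβ hγ (hCne0 σ0 hσ0C)
  obtain ⟨η, x, hdot1, hxV, hψx⟩ := Glem hp hsimple hn θ hθt hθsub ht0 hab12 hab13 hab23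
    htor1 htor2 htor3 hspan hα hβ hγ hdimt χ hχ0 (Lfun t α β γ σ0) hLσ0
  by_cases hησ : η = σ0
  · subst hησ
    exact hψx (Ztau hp hn θ hθsub hxV)
  · have hη0 : η ≠ 0 := by
      intro h0
      rw [h0, dotA_zero] at hdot1
      exact absurd hdot1 (by decide)
    have hnotC : σ0 + η ∉ C := by
      intro hmem
      have hne : σ0 + η ≠ σ0 := by
        intro h0
        apply hη0
        have h2 := A2_add_add_cancel σ0 η
        rw [h0, A2_add_self] at h2
        exact h2.symm
      have hmem' : σ0 + η ∈ C.erase σ0 := Finset.mem_erase.mpr ⟨hne, hmem⟩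
      have himg : η ∈ (C.erase σ0).image (fun μ => σ0 + μ) := by
        rw [Finset.mem_image]
        exact ⟨σ0 + η, hmem', A2_add_add_cancel σ0 η⟩
      rcases hcover η himg with rfl | rfl
      · rw [hχ1] at hdot1; exact absurd hdot1 (by decide)
      · rw [hχ2] at hdot1; exact absurd hdot1 (by decide)
    have hNE : ¬ Edge σ0 (σ0 + η) := fun he => hnotC (hclosed _ he)
    apply hNE
    refine ⟨x, ?_, hψx⟩
    rw [A2_add_add_cancel σ0 η]
    exact hxV

section Seven

variable {F : Type*} [Field F] [CharP F 2] {g : Type*} [LieRing g] [LieAlgebra F g]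
variable {t : LieSubalgebra F g} (α β γ : Module.Dual F t)

lemma L100 : Lfun t α β γ ((1 : ZMod 2), (0 : ZMod 2), (0 : ZMod 2)) = α := by
  unfold Lfun
  rw [ccF_one, ccF_zero, one_smul, zero_smul, zero_smul, add_zero, add_zero]

lemma L010 : Lfun t α β γ ((0 : ZMod 2), (1 : ZMod 2), (0 : ZMod 2)) = β := by
  unfold Lfun
  rw [ccF_one, ccF_zero, one_smul, zero_smul, zero_smul, zero_add, add_zero]

lemma L001 : Lfun t α β γ ((0 : ZMod 2), (0 : ZMod 2), (1 : ZMod 2)) = γ := by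
  unfold Lfun
  rw [ccF_one, ccF_zero, one_smul, zero_smul, zero_smul, zero_add, zero_add]

lemma L110 : Lfun t α β γ ((1 : ZMod 2), (1 : ZMod 2), (0 : ZMod 2)) = α + β := by
  unfold Lfun
  rw [ccF_one, ccF_zero, one_smul, one_smul, zero_smul, add_zero]

lemma L101 : Lfun t α β γ ((1 : ZMod 2), (0 : ZMod 2), (1 : ZMod 2)) = α + γ := by
  unfold Lfun
  rw [ccF_one, ccF_zero, one_smul, one_smul, zero_smul, add_zero]

lemma L011 : Lfun t α β γ ((0 : ZMod 2), (1 : ZMod 2), (1 : ZMod 2)) = β + γ := by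
  unfold Lfun
  rw [ccF_one, ccF_zero, one_smul, one_smul, zero_smul, zero_add]

lemma L111 : Lfun t α β γ ((1 : ZMod 2), (1 : ZMod 2), (1 : ZMod 2)) = α + β + γ := by
  unfold Lfun
  rw [ccF_one, one_smul, one_smul, one_smul]

end Seven

/-- in a simple Lie 2-algebra of toral rank 3 with a standard
(triangulable) maximal torus, all root spaces attached to the nonzero elements of `t*`
have the same dimension. -/
theorem statement18
    {F : Type*} [Field F] [IsAlgClosed F] [CharP F 2]
    {g : Type*} [LieRing g] [LieAlgebra F g] [FiniteDimensional F g]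
    (p : g → g) (hp : IsTwoMap F p)
    (hdim1 : Module.finrank F g ≠ 1)
    (hsimple : ∀ I : LieIdeal F g, I = ⊥ ∨ I = ⊤)
    (t : LieSubalgebra F g) (hmax : IsMaxTorus F p t)
    (n : Submodule F g)
    (hn : ∀ x : g, x ∈ n ↔ x ∈ rootSpace t 0 ∧ IsTwoNilpotent p x)
    (hstd : ∀ x ∈ rootSpace t 0, ∀ y ∈ n, ⁅x, y⁆ ∈ n)
    (hdecomp : rootSpace t 0 = t.toSubmodule ⊔ n)
    (hdisj : Disjoint t.toSubmodule n)
    (hrank : ∀ s : LieSubalgebra F g, IsTorus F p s → Module.finrank F s ≤ 3)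
    (hdimt : Module.finrank F t = 3)
    (t₁ t₂ t₃ : t)
    (htor1 : p (t₁ : g) = (t₁ : g)) (htor2 : p (t₂ : g) = (t₂ : g))
    (htor3 : p (t₃ : g) = (t₃ : g))
    (hspan : Submodule.span F ({t₁, t₂, t₃} : Set t) = ⊤)
    (α β γ : Module.Dual F t)
    (hα : α t₁ = 1 ∧ α t₂ = 0 ∧ α t₃ = 0)
    (hβ : β t₁ = 0 ∧ β t₂ = 1 ∧ β t₃ = 0)
    (hγ : γ t₁ = 0 ∧ γ t₂ = 0 ∧ γ t₃ = 1)
    : ∀ ξ ∈ ({α, β, γ, α + β, α + γ, β + γ, α + β + γ} : Set (Module.Dual F t)),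
      ∀ σ ∈ ({α, β, γ, α + β, α + γ, β + γ, α + β + γ} : Set (Module.Dual F t)),
        Module.finrank F (rootSpace t ξ) = Module.finrank F (rootSpace t σ) := by
  have key := main_aux p hp hsimple t n hn hdecomp hdisj hdimt t₁ t₂ t₃ htor1 htor2 htor3
    hspan α β γ hα hβ hγ
  have heq : ∀ lam ∈ ({α, β, γ, α + β, α + γ, β + γ, α + β + γ} : Set (Module.Dual F t)),
      ∃ ε : A2, ε ≠ 0 ∧ rootSpace t lam = Vsp t α β γ ε := by
    intro lam hlam
    simp only [Set.mem_insert_iff, Set.mem_singleton_iff] at hlam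
    rcases hlam with rfl | rfl | rfl | rfl | rfl | rfl | rfl
    · exact ⟨((1 : ZMod 2), (0 : ZMod 2), (0 : ZMod 2)), by decide,
        by unfold Vsp; rw [L100]⟩
    · exact ⟨((0 : ZMod 2), (1 : ZMod 2), (0 : ZMod 2)), by decide,
        by unfold Vsp; rw [L010]⟩
    · exact ⟨((0 : ZMod 2), (0 : ZMod 2), (1 : ZMod 2)), by decide,
        by unfold Vsp; rw [L001]⟩
    · exact ⟨((1 : ZMod 2), (1 : ZMod 2), (0 : ZMod 2)), by decide,
        by unfold Vsp; rw [L110]⟩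
    · exact ⟨((1 : ZMod 2), (0 : ZMod 2), (1 : ZMod 2)), by decide,
        by unfold Vsp; rw [L101]⟩
    · exact ⟨((0 : ZMod 2), (1 : ZMod 2), (1 : ZMod 2)), by decide,
        by unfold Vsp; rw [L011]⟩
    · exact ⟨((1 : ZMod 2), (1 : ZMod 2), (1 : ZMod 2)), by decide,
        by unfold Vsp; rw [L111]⟩
  intro ξ hξ σ hσ
  obtain ⟨e1, he1, hrw1⟩ := heq ξ hξ
  obtain ⟨e2, he2, hrw2⟩ := heq σ hσ
  rw [hrw1, hrw2]
  exact key e1 e2 he1 he2
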